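/- arXiv:1307.5694 — 2 statements merged into one kernel-verified Lean document; each statement's English description precedes it below -/
import Mathlib

section
/- Let π₀ = π₁ ∘ φ₀ where π₁ : H → M is a fiber bundle over a path-connected base and φ₀ : H → H is homotopic to the identity. Suppose β is a ℤ/2-cohomology class of H whose restriction to some fiber π₀⁻¹(x) is nonzero, and suppose y is a point such that φ₀ restricted to π₀⁻¹(y) induces an injection on ℤ/2-cohomology of π₁⁻¹(y) into that of π₀⁻¹(y). Then the restriction of β to π₀⁻¹(y) is nonzero. -/
/-- A (mod 2, say) cohomology theory on topological spaces: a contravariant,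
homotopy-invariant assignment of a pointed type (cohomology with its zero class)
to each space. -/
structure CohomologyTheory : Type 1 where
  coh : (X : Type) → [TopologicalSpace X] → Type
  zero : ∀ (X : Type) [TopologicalSpace X], coh X
  pull : ∀ {X Y : Type} [TopologicalSpace X] [TopologicalSpace Y], C(X, Y) → coh Y → coh X
  pull_id : ∀ {X : Type} [TopologicalSpace X] (β : coh X), pull (ContinuousMap.id X) β = β
  pull_comp : ∀ {X Y Z : Type} [TopologicalSpace X] [TopologicalSpace Y] [TopologicalSpace Z]
    (f : C(X, Y)) (g : C(Y, Z)) (β : coh Z), pull (g.comp f) β = pull f (pull g β)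
  pull_zero : ∀ {X Y : Type} [TopologicalSpace X] [TopologicalSpace Y] (f : C(X, Y)),
    pull f (zero Y) = zero X
  pull_homotopic : ∀ {X Y : Type} [TopologicalSpace X] [TopologicalSpace Y]
    (f g : C(X, Y)), f.Homotopic g → ∀ β : coh Y, pull f β = pull g β

/-- The inclusion of the fiber of `π` over `x` as a continuous map. -/
def fiberIncl {H M : Type} [TopologicalSpace H] (π : H → M) (x : M) :
    C({h : H // π h = x}, H) :=
  ⟨Subtype.val, continuous_subtype_val⟩

/-- The restriction of `φ₀` to a fiber of `π₀ = π₁ ∘ φ₀`, as a continuous map into the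
corresponding fiber of `π₁`. -/
def phiFiberRestrict {H M : Type} [TopologicalSpace H] (π₁ : H → M) (φ₀ : C(H, H))
    (y : M) : C({h : H // π₁ (φ₀ h) = y}, {h : H // π₁ h = y}) :=
  ⟨fun h => ⟨φ₀ h, h.2⟩, by fun_prop⟩

/-- Transfer lemma: a path inside the base set of a trivialization transports vanishing
of the restriction of a class from the fiber over its start to the fiber over its end. -/
lemma fiber_transfer (Coh : CohomologyTheory) {H M F : Type} [TopologicalSpace H]
    [TopologicalSpace M] [TopologicalSpace F] (π₁ : H → M)
    (e : Bundle.Trivialization F π₁) (γ : C(unitInterval, M)) (hsub : ∀ s, γ s ∈ e.baseSet)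
    (β : Coh.coh H)
    (h0 : Coh.pull (fiberIncl π₁ (γ 0)) β = Coh.zero _) :
    Coh.pull (fiberIncl π₁ (γ 1)) β = Coh.zero _ := by
  set Fib := {h : H // π₁ h = γ 1}
  have hmem1 : ∀ h : Fib, π₁ h.1 ∈ e.baseSet := fun h => by rw [h.2]; exact hsub 1
  have hq : Continuous fun h : Fib => (e h.1 : M × F) := by
    have : Continuous ((e.toOpenPartialHomeomorph : H → M × F) ∘ (Subtype.val : Fib → H)) :=
      e.toOpenPartialHomeomorph.continuousOn.comp_continuous continuous_subtype_val
        fun h => e.mem_source.2 (hmem1 h)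
    exact this
  have hmemt : ∀ (s : unitInterval) (h : Fib), ((γ s, (e h.1).2) : M × F) ∈ e.target :=
    fun s h => e.mem_target.2 (hsub s)
  let f : C(Fib, {h : H // π₁ h = γ 0}) :=
    ⟨fun h => ⟨e.toOpenPartialHomeomorph.symm (γ 0, (e h.1).2),
        e.proj_symm_apply (hmemt 0 _)⟩, by
      apply Continuous.subtype_mk
      exact e.toOpenPartialHomeomorph.continuousOn_symm.comp_continuous
        ((γ.continuous.comp continuous_const).prodMk hq.snd) (hmemt 0)⟩
  have hK : Continuous fun p : unitInterval × Fib =>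
      e.toOpenPartialHomeomorph.symm (γ p.1, (e p.2.1).2) :=
    e.toOpenPartialHomeomorph.continuousOn_symm.comp_continuous
      ((γ.continuous.comp continuous_fst).prodMk (hq.comp continuous_snd).snd)
      (fun p => hmemt p.1 p.2)
  have hom : ((fiberIncl π₁ (γ 0)).comp f).Homotopic (fiberIncl π₁ (γ 1)) := by
    refine ⟨⟨⟨fun p => e.toOpenPartialHomeomorph.symm (γ p.1, (e p.2.1).2), hK⟩, ?_, ?_⟩⟩
    · intro h; rfl
    · intro h
      show e.toOpenPartialHomeomorph.symm (γ 1, (e h.1).2) = h.1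
      have hfst : (e h.1).1 = π₁ h.1 := e.coe_fst' (hmem1 h)
      have h1 : ((γ 1, (e h.1).2) : M × F) = e h.1 :=
        Prod.ext (by rw [hfst, h.2]) rfl
      rw [h1]
      exact e.toOpenPartialHomeomorph.left_inv (e.mem_source.2 (hmem1 h))
  calc Coh.pull (fiberIncl π₁ (γ 1)) β
      = Coh.pull ((fiberIncl π₁ (γ 0)).comp f) β :=
        (Coh.pull_homotopic _ _ hom β).symm
    _ = Coh.pull f (Coh.pull (fiberIncl π₁ (γ 0)) β) := Coh.pull_comp _ _ _
    _ = Coh.zero _ := by rw [h0, Coh.pull_zero]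

/-- The linear path in the unit interval from `t` to `t'`. -/
noncomputable def segPath (t t' : unitInterval) : C(unitInterval, unitInterval) :=
  ⟨fun s => ⟨(1 - s.1) * t.1 + s.1 * t'.1, by
      have h := (convex_Icc (0:ℝ) 1) t.2 t'.2 (a := 1 - s.1) (b := s.1) (by linarith [s.2.2]) s.2.1 (by ring)
      simpa [smul_eq_mul] using h⟩, by
    apply Continuous.subtype_mk
    fun_prop⟩

lemma segPath_zero (t t' : unitInterval) : segPath t t' 0 = t :=
  Subtype.ext (by simp [segPath])

lemma segPath_one (t t' : unitInterval) : segPath t t' 1 = t' :=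
  Subtype.ext (by simp [segPath])

lemma segPath_dist (t t' : unitInterval) (s : unitInterval) :
    dist (segPath t t' s) t ≤ dist t' t := by
  rw [Subtype.dist_eq, Real.dist_eq, Subtype.dist_eq, Real.dist_eq]
  show |(1 - s.1) * t.1 + s.1 * t'.1 - t.1| ≤ |t'.1 - t.1|
  have h : (1 - s.1) * t.1 + s.1 * t'.1 - t.1 = s.1 * (t'.1 - t.1) := by ring
  rw [h, abs_mul, abs_of_nonneg s.2.1]
  nlinarith [abs_nonneg (t'.1 - t.1), s.2.2]

lemma segPath_dist' (t t' : unitInterval) (s : unitInterval) :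
    dist (segPath t t' s) t' ≤ dist t t' := by
  rw [Subtype.dist_eq, Real.dist_eq, Subtype.dist_eq, Real.dist_eq]
  show |(1 - s.1) * t.1 + s.1 * t'.1 - t'.1| ≤ |t.1 - t'.1|
  have h : (1 - s.1) * t.1 + s.1 * t'.1 - t'.1 = (1 - s.1) * (t.1 - t'.1) := by ring
  rw [h, abs_mul, abs_of_nonneg (by linarith [s.2.2])]
  nlinarith [abs_nonneg (t.1 - t'.1), s.2.1]

/-- Fiberwise vanishing is independent of the point, over a path-connected base. -/
lemma fiber_vanish_const (Coh : CohomologyTheory) {H M F : Type} [TopologicalSpace H]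
    [TopologicalSpace M] [TopologicalSpace F] [PathConnectedSpace M] (π₁ : H → M)
    (htriv : ∀ x : M, ∃ e : Bundle.Trivialization F π₁, x ∈ e.baseSet)
    (β : Coh.coh H) (x y : M)
    (h0 : Coh.pull (fiberIncl π₁ x) β = Coh.zero _) :
    Coh.pull (fiberIncl π₁ y) β = Coh.zero _ := by
  obtain ⟨γ⟩ := PathConnectedSpace.joined x y
  set T : Set unitInterval := {t | Coh.pull (fiberIncl π₁ (γ t)) β = Coh.zero _} with hT
  have key : ∀ t : unitInterval, ∃ ε > 0, ∀ t' ∈ Metric.ball t ε,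
      ((t : unitInterval) ∈ T ↔ t' ∈ T) := by
    intro t
    obtain ⟨e, he⟩ := htriv (γ t)
    have hU : IsOpen (γ.toContinuousMap ⁻¹' e.baseSet) :=
      e.open_baseSet.preimage γ.continuous
    obtain ⟨ε, hε, hball⟩ := Metric.isOpen_iff.1 hU t he
    refine ⟨ε, hε, fun t' ht' => ?_⟩
    rw [Metric.mem_ball] at ht'
    have hseg : ∀ s, γ.toContinuousMap ((segPath t t') s) ∈ e.baseSet := fun s =>
      hball (Metric.mem_ball.2 (lt_of_le_of_lt (segPath_dist t t' s) ht'))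
    have hseg' : ∀ s, γ.toContinuousMap ((segPath t' t) s) ∈ e.baseSet := fun s =>
      hball (Metric.mem_ball.2 (lt_of_le_of_lt (segPath_dist' t' t s) ht'))
    constructor
    · intro h
      have h0' : Coh.pull (fiberIncl π₁ ((γ.toContinuousMap.comp (segPath t t')) 0)) β
          = Coh.zero _ := by
        rw [ContinuousMap.comp_apply, segPath_zero]; exact h
      have := fiber_transfer Coh π₁ e (γ.toContinuousMap.comp (segPath t t')) hseg β h0'
      rw [ContinuousMap.comp_apply, segPath_one] at this
      exact this
    · intro h
      have h0' : Coh.pull (fiberIncl π₁ ((γ.toContinuousMap.comp (segPath t' t)) 0)) β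
          = Coh.zero _ := by
        rw [ContinuousMap.comp_apply, segPath_zero]; exact h
      have := fiber_transfer Coh π₁ e (γ.toContinuousMap.comp (segPath t' t)) hseg' β h0'
      rw [ContinuousMap.comp_apply, segPath_one] at this
      exact this
  have hopen : IsOpen T := by
    rw [Metric.isOpen_iff]
    intro t ht
    obtain ⟨ε, hε, hiff⟩ := key t
    exact ⟨ε, hε, fun t' ht' => (hiff t' ht').1 ht⟩
  have hclosed : IsOpen Tᶜ := by
    rw [Metric.isOpen_iff]
    intro t ht
    obtain ⟨ε, hε, hiff⟩ := key t
    exact ⟨ε, hε, fun t' ht' h => ht ((hiff t' ht').2 h)⟩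
  have h01 : (0 : unitInterval) ∈ T := by
    show Coh.pull (fiberIncl π₁ (γ 0)) β = Coh.zero _
    rw [γ.source]; exact h0
  rcases isClopen_iff.1 ⟨⟨hclosed⟩, hopen⟩ with h | h
  · exact absurd (h ▸ h01) (Set.notMem_empty _)
  · have h1 : (1 : unitInterval) ∈ T := h ▸ Set.mem_univ _
    have : Coh.pull (fiberIncl π₁ (γ 1)) β = Coh.zero _ := h1
    rwa [γ.target] at this

/-- Let `π₁ : H → M` be a fiber bundle over a path-connected base, `φ₀ ≃ id_H`, and
`π₀ := π₁ ∘ φ₀`.  If a cohomology class `β` of `H` restricts nontrivially to `π₀⁻¹(x)`,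
and `φ₀|_{π₀⁻¹(y)}` induces an injection on cohomology, then `β` restricts nontrivially
to `π₀⁻¹(y)`. -/
theorem stmt8 (Coh : CohomologyTheory) {H M F : Type} [TopologicalSpace H]
    [TopologicalSpace M] [TopologicalSpace F] [PathConnectedSpace M]
    (π₁ : H → M) (hπ : Continuous π₁)
    (htriv : ∀ x : M, ∃ e : Bundle.Trivialization F π₁, x ∈ e.baseSet)
    (φ₀ : C(H, H)) (hφ : φ₀.Homotopic (ContinuousMap.id H))
    (β : Coh.coh H) (x y : M)
    (hx : Coh.pull (fiberIncl (fun h => π₁ (φ₀ h)) x) β ≠ Coh.zero _)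
    (hinj : Function.Injective (Coh.pull (phiFiberRestrict π₁ φ₀ y))) :
    Coh.pull (fiberIncl (fun h => π₁ (φ₀ h)) y) β ≠ Coh.zero _ := by
  have hβ : Coh.pull φ₀ β = β := by
    rw [Coh.pull_homotopic _ _ hφ, Coh.pull_id]
  have hcomp : ∀ z : M, ((fiberIncl π₁ z).comp (phiFiberRestrict π₁ φ₀ z)
      : C({h : H // π₁ (φ₀ h) = z}, H)) = φ₀.comp (fiberIncl (fun h => π₁ (φ₀ h)) z) :=
    fun z => rfl
  have key : ∀ z : M, Coh.pull (fiberIncl (fun h => π₁ (φ₀ h)) z) β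
      = Coh.pull (phiFiberRestrict π₁ φ₀ z) (Coh.pull (fiberIncl π₁ z) β) := by
    intro z
    conv_lhs => rw [← hβ]
    rw [← Coh.pull_comp, ← hcomp z, Coh.pull_comp]
  have hrx : Coh.pull (fiberIncl π₁ x) β ≠ Coh.zero _ := by
    intro h
    exact hx (by rw [key x, h, Coh.pull_zero])
  have hry : Coh.pull (fiberIncl π₁ y) β ≠ Coh.zero _ := by
    intro h
    exact hrx (fiber_vanish_const Coh π₁ htriv β y x h)
  intro h
  rw [key y] at h
  exact hry (hinj (h.trans (Coh.pull_zero _).symm))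
end

section
/- Let π₁ : H → M be a fiber bundle with path-connected base and φ₀ : H → H a map homotopic to the identity; set π₀ := π₁ ∘ φ₀. Suppose there exist points x, y ∈ M and a ℤ/2-cohomology class β of H such that β restricts nontrivially to π₀⁻¹(x), β restricts trivially to π₀⁻¹(y), and φ₀ restricted to π₀⁻¹(y) induces an injection (φ₀|)* : H*(π₁⁻¹(y); ℤ/2) → H*(π₀⁻¹(y); ℤ/2). Then we reach a contradiction; i.e., no such configuration exists. -/
/-- Membership of a convex combination in the unit interval. -/
lemma seg_mem_unitInterval (s t u : unitInterval) :
    (1 - u.val) * s.val + u.val * t.val ∈ unitInterval := by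
  obtain ⟨hu0, hu1⟩ := u.2
  obtain ⟨hs0, hs1⟩ := s.2
  obtain ⟨ht0, ht1⟩ := t.2
  constructor <;> nlinarith

/-- The affine segment from `s` to `t` in the unit interval, as a continuous map. -/
noncomputable def seg (s t : unitInterval) : C(unitInterval, unitInterval) :=
  ⟨fun u => ⟨(1 - u.val) * s.val + u.val * t.val, seg_mem_unitInterval s t u⟩, by
    apply Continuous.subtype_mk
    fun_prop⟩

lemma seg_zero (s t : unitInterval) : seg s t 0 = s := by
  apply Subtype.ext; simp [seg]

lemma seg_one (s t : unitInterval) : seg s t 1 = t := by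
  apply Subtype.ext; simp [seg]

lemma seg_mem_Icc {a b s t : unitInterval} (hs : s ∈ Set.Icc a b) (ht : t ∈ Set.Icc a b)
    (u : unitInterval) : seg s t u ∈ Set.Icc a b := by
  have hu0 := u.2.1
  have hu1 := u.2.2
  have hs1 : a.val ≤ s.val := hs.1
  have hs2 : s.val ≤ b.val := hs.2
  have ht1 : a.val ≤ t.val := ht.1
  have ht2 : t.val ≤ b.val := ht.2
  constructor
  · show a.val ≤ (1 - u.val) * s.val + u.val * t.val
    nlinarith
  · show (1 - u.val) * s.val + u.val * t.val ≤ b.val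
    nlinarith

/-- Transport of vanishing of fiber restrictions along a path inside the base set of
a trivialization. -/
lemma transport (Coh : CohomologyTheory) {H M F : Type} [TopologicalSpace H]
    [TopologicalSpace M] [TopologicalSpace F]
    (π₁ : H → M) (e : Bundle.Trivialization F π₁) (γ : C(unitInterval, M))
    (hγ : ∀ t, γ t ∈ e.baseSet) (β : Coh.coh H)
    (h1 : Coh.pull (fiberIncl π₁ (γ 1)) β = Coh.zero _) :
    Coh.pull (fiberIncl π₁ (γ 0)) β = Coh.zero _ := by
  set z := γ 0 with hz
  set w := γ 1 with hw
  -- the transport map between fibers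
  have hTmem : ∀ h : {h : H // π₁ h = z},
      π₁ (e.toOpenPartialHomeomorph.symm (w, (e h.val).2)) = w :=
    fun h => e.proj_symm_apply' (hγ 1)
  have hsource : ∀ h : {h : H // π₁ h = z}, h.val ∈ e.source := by
    intro h
    rw [e.mem_source, h.2]
    exact hγ 0
  have hcont2 : Continuous fun h : {h : H // π₁ h = z} => (e h.val).2 := by
    refine continuous_snd.comp (e.continuousOn_toFun.comp_continuous continuous_subtype_val
      hsource)
  have hcontsymm : ∀ (g : unitInterval × {h : H // π₁ h = z} → M)
      (hg : Continuous g) (hmem : ∀ p, g p ∈ e.baseSet),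
      Continuous fun p : unitInterval × {h : H // π₁ h = z} =>
        e.toOpenPartialHomeomorph.symm (g p, (e p.2.val).2) := by
    intro g hg hmem
    refine e.toOpenPartialHomeomorph.continuousOn_symm.comp_continuous
      (by exact hg.prodMk (hcont2.comp continuous_snd)) ?_
    intro p
    rw [e.mem_target]
    exact hmem p
  let T : C({h : H // π₁ h = z}, {h : H // π₁ h = w}) :=
    ⟨fun h => ⟨e.toOpenPartialHomeomorph.symm (w, (e h.val).2), hTmem h⟩, by
      apply Continuous.subtype_mk
      refine e.toOpenPartialHomeomorph.continuousOn_symm.comp_continuous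
        (continuous_const.prodMk hcont2) ?_
      intro h
      rw [e.mem_target]
      exact hγ 1⟩
  -- homotopy between fiber inclusion over z and (fiber inclusion over w) ∘ T
  have hhtp : (fiberIncl π₁ z).Homotopic ((fiberIncl π₁ w).comp T) := by
    refine ⟨⟨⟨fun p => e.toOpenPartialHomeomorph.symm (γ p.1, (e p.2.val).2), ?_⟩, ?_, ?_⟩⟩
    · exact hcontsymm (fun p => γ p.1) (γ.continuous.comp continuous_fst) (fun p => hγ p.1)
    · intro h
      show e.toOpenPartialHomeomorph.symm (z, (e h.val).2) = h.val
      have h2 : ((z : M), (e h.val).2) = (π₁ h.val, (e h.val).2) := by rw [h.2]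
      rw [h2]
      exact e.symm_apply_mk_proj (hsource h)
    · intro h
      rfl
  calc Coh.pull (fiberIncl π₁ z) β
      = Coh.pull ((fiberIncl π₁ w).comp T) β := Coh.pull_homotopic _ _ hhtp β
    _ = Coh.pull T (Coh.pull (fiberIncl π₁ w) β) := Coh.pull_comp _ _ β
    _ = Coh.pull T (Coh.zero _) := by rw [h1]
    _ = Coh.zero _ := Coh.pull_zero T

/-- Core contradiction in the proof of Legendrian non-displacement: for a fiber bundle
`π₁ : H → M` with path-connected base and `φ₀ ≃ id_H`, `π₀ := π₁ ∘ φ₀`, there is no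
cohomology class `β` of `H` restricting nontrivially to `π₀⁻¹(x)` but trivially to
`π₀⁻¹(y)` when `φ₀|_{π₀⁻¹(y)}` induces an injection on cohomology. -/
theorem stmt17 (Coh : CohomologyTheory) {H M F : Type} [TopologicalSpace H]
    [TopologicalSpace M] [TopologicalSpace F] [PathConnectedSpace M]
    (π₁ : H → M) (hπ : Continuous π₁)
    (htriv : ∀ x : M, ∃ e : Bundle.Trivialization F π₁, x ∈ e.baseSet)
    (φ₀ : C(H, H)) (hφ : φ₀.Homotopic (ContinuousMap.id H))
    (β : Coh.coh H) (x y : M)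
    (hx : Coh.pull (fiberIncl (fun h => π₁ (φ₀ h)) x) β ≠ Coh.zero _)
    (hy : Coh.pull (fiberIncl (fun h => π₁ (φ₀ h)) y) β = Coh.zero _)
    (hinj : Function.Injective (Coh.pull (phiFiberRestrict π₁ φ₀ y))) :
    False := by
  -- Step 1: the key naturality square
  have step1 : ∀ z : M, Coh.pull (fiberIncl (fun h => π₁ (φ₀ h)) z) β =
      Coh.pull (phiFiberRestrict π₁ φ₀ z) (Coh.pull (fiberIncl π₁ z) β) := by
    intro z
    have key : (fiberIncl π₁ z).comp (phiFiberRestrict π₁ φ₀ z) =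
        φ₀.comp (fiberIncl (fun h => π₁ (φ₀ h)) z) := by
      ext h; rfl
    have hβ : Coh.pull φ₀ β = β := by
      rw [Coh.pull_homotopic φ₀ (ContinuousMap.id H) hφ β, Coh.pull_id]
    calc Coh.pull (fiberIncl (fun h => π₁ (φ₀ h)) z) β
        = Coh.pull (fiberIncl (fun h => π₁ (φ₀ h)) z) (Coh.pull φ₀ β) := by rw [hβ]
      _ = Coh.pull (φ₀.comp (fiberIncl (fun h => π₁ (φ₀ h)) z)) β :=
          (Coh.pull_comp _ _ β).symm
      _ = Coh.pull ((fiberIncl π₁ z).comp (phiFiberRestrict π₁ φ₀ z)) β := by rw [key]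
      _ = Coh.pull (phiFiberRestrict π₁ φ₀ z) (Coh.pull (fiberIncl π₁ z) β) :=
          Coh.pull_comp _ _ β
  -- Step 2: β restricts trivially to π₁⁻¹(y)
  have b1y : Coh.pull (fiberIncl π₁ y) β = Coh.zero _ := by
    apply hinj
    rw [← step1 y, hy, Coh.pull_zero]
  -- Step 3: β restricts nontrivially to π₁⁻¹(x)
  have b1x : Coh.pull (fiberIncl π₁ x) β ≠ Coh.zero _ := by
    intro h0
    apply hx
    rw [step1 x, h0, Coh.pull_zero]
  -- Step 4: propagate vanishing from y to x along a path
  obtain ⟨γ⟩ := PathConnectedSpace.joined x y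
  set S : Set unitInterval := {t | Coh.pull (fiberIncl π₁ (γ t)) β = Coh.zero _} with hS
  have h1S : (1 : unitInterval) ∈ S := by
    show Coh.pull (fiberIncl π₁ (γ 1)) β = Coh.zero _
    rw [γ.target]; exact b1y
  have h0S : (0 : unitInterval) ∉ S := by
    show ¬ Coh.pull (fiberIncl π₁ (γ 0)) β = Coh.zero _
    rw [γ.source]; exact b1x
  -- local constancy of vanishing
  have loc : ∀ t : unitInterval, ∃ U ∈ nhds t, ∀ s ∈ U, (s ∈ S ↔ t ∈ S) := by
    intro t
    obtain ⟨e, he⟩ := htriv (γ t)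
    have hU : γ.toContinuousMap ⁻¹' e.baseSet ∈ nhds t :=
      (e.open_baseSet.preimage γ.continuous).mem_nhds he
    obtain ⟨a, b, htab, hab_nhds, hab_sub⟩ := exists_Icc_mem_subset_of_mem_nhds hU
    refine ⟨Set.Icc a b, hab_nhds, fun s hs => ?_⟩
    have hpt : ∀ {p q : M}, p = q → Coh.pull (fiberIncl π₁ p) β = Coh.zero _ →
        Coh.pull (fiberIncl π₁ q) β = Coh.zero _ := by
      rintro p q rfl h
      exact h
    have hseg : ∀ s' t' : unitInterval, s' ∈ Set.Icc a b → t' ∈ Set.Icc a b →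
        (t' ∈ S → s' ∈ S) := by
      intro s' t' hs' ht' hvan
      have hv1 : Coh.pull (fiberIncl π₁ ((γ.toContinuousMap.comp (seg s' t')) 1)) β =
          Coh.zero _ := hpt (congrArg (fun u => γ u) (seg_one s' t')).symm hvan
      have := transport Coh π₁ e (γ.toContinuousMap.comp (seg s' t'))
        (fun u => hab_sub (seg_mem_Icc hs' ht' u)) β hv1
      exact hpt (congrArg (fun u => γ u) (seg_zero s' t')) this
    exact ⟨hseg t s htab hs, hseg s t hs htab⟩
  have hopen : IsOpen S := by
    rw [isOpen_iff_mem_nhds]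
    intro t ht
    obtain ⟨U, hU, hloc⟩ := loc t
    exact Filter.mem_of_superset hU (fun s hs => (hloc s hs).mpr ht)
  have hclosed : IsOpen Sᶜ := by
    rw [isOpen_iff_mem_nhds]
    intro t ht
    obtain ⟨U, hU, hloc⟩ := loc t
    exact Filter.mem_of_superset hU (fun s hs hsS => ht ((hloc s hs).mp hsS))
  have hclopen : IsClopen S := ⟨⟨hclosed⟩, hopen⟩
  rcases isClopen_iff.mp hclopen with h | h
  · rw [h] at h1S; exact h1S
  · rw [h] at h0S; exact h0S (Set.mem_univ _)
end
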